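/- arXiv:1607.08312 — 5 statements merged into one kernel-verified Lean document; each statement's English description precedes it below -/
import Mathlib

section
/- Let G be a graph, v a vertex, and Q a maximum clique of the induced subgraph on N(v). If G is claw-free, then for any two nonadjacent vertices w, z in N(v) \ Q, there exist w', z' in Q with ww' and zz' not edges, and moreover wz' and zw' are edges of G. -/
open SimpleGraph

def claw : SimpleGraph (Fin 1 ⊕ Fin 3) := completeBipartiteGraph (Fin 1) (Fin 3)

def ClawFree {V : Type*} (G : SimpleGraph V) : Prop := ¬ Nonempty (claw ↪g G)

/-- `Q` is a maximum clique of the subgraph of `G` induced on the neighborhood of `v`. -/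
def IsMaxCliqueInNbhd {V : Type*} (G : SimpleGraph V) (v : V) (Q : Finset V) : Prop :=
  ↑Q ⊆ G.neighborSet v ∧ G.IsClique ↑Q ∧
    ∀ R : Finset V, ↑R ⊆ G.neighborSet v → G.IsClique ↑R → R.card ≤ Q.card

lemma no_claw {V : Type*} {G : SimpleGraph V} (hG : ClawFree G) {v a b c : V}
    (ha : G.Adj v a) (hb : G.Adj v b) (hc : G.Adj v c)
    (hab : ¬G.Adj a b) (hac : ¬G.Adj a c) (hbc : ¬G.Adj b c)
    (nab : a ≠ b) (nac : a ≠ c) (nbc : b ≠ c) : False := by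
  apply hG
  refine ⟨⟨⟨Sum.elim (fun _ => v) ![a, b, c], ?_⟩, ?_⟩⟩
  · rintro (x | x) (y | y) h
    · fin_cases x; fin_cases y; rfl
    · exfalso; fin_cases x <;> fin_cases y <;> simp at h <;>
        first | exact ha.ne' h.symm | exact hb.ne' h.symm | exact hc.ne' h.symm
    · exfalso; fin_cases x <;> fin_cases y <;> simp at h <;>
        first | exact ha.ne' h | exact hb.ne' h | exact hc.ne' h
    · fin_cases x <;> fin_cases y <;> simp_all
  · rintro (x | x) (y | y) <;>
      dsimp only [DFunLike.coe] <;>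
      simp [claw, completeBipartiteGraph] <;>
      fin_cases x <;> fin_cases y <;>
      simp_all [G.irrefl, ha, hb, hc, ha.symm, hb.symm, hc.symm] <;>
      first
      | exact fun h => hab h.symm
      | exact fun h => hac h.symm
      | exact fun h => hbc h.symm

theorem stmt_1 {V : Type*} [Fintype V] [DecidableEq V] {G : SimpleGraph V}
    (hG : ClawFree G) (v : V) (Q : Finset V) (hQ : IsMaxCliqueInNbhd G v Q)
    (w z : V) (hw : w ∈ G.neighborSet v \ ↑Q) (hz : z ∈ G.neighborSet v \ ↑Q)
    (hwz : w ≠ z) (hnadj : ¬ G.Adj w z) :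
    ∃ w' ∈ Q, ∃ z' ∈ Q, ¬ G.Adj w w' ∧ ¬ G.Adj z z' ∧ G.Adj w z' ∧ G.Adj z w' := by
  classical
  obtain ⟨hQsub, hQcl, hQmax⟩ := hQ
  obtain ⟨hwv, hwQ⟩ := hw
  obtain ⟨hzv, hzQ⟩ := hz
  -- existence of a non-neighbor of any x ∈ N(v) \ Q inside Q
  have key : ∀ x : V, x ∈ G.neighborSet v → x ∉ Q → ∃ x' ∈ Q, ¬ G.Adj x x' := by
    intro x hxv hxQ
    by_contra h
    push_neg at h
    have hclique : G.IsClique ↑(insert x Q) := by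
      rw [Finset.coe_insert]
      apply hQcl.insert
      intro y hy hne
      exact h y hy
    have hsub : ↑(insert x Q) ⊆ G.neighborSet v := by
      rw [Finset.coe_insert]
      rintro y (rfl | hy)
      · exact hxv
      · exact hQsub hy
    have := hQmax _ hsub hclique
    rw [Finset.card_insert_of_notMem hxQ] at this
    omega
  obtain ⟨w', hw'Q, hww'⟩ := key w hwv hwQ
  obtain ⟨z', hz'Q, hzz'⟩ := key z hzv hzQ
  refine ⟨w', hw'Q, z', hz'Q, hww', hzz', ?_, ?_⟩
  · by_contra hwz'
    exact no_claw hG hwv hzv ((hQsub hz'Q)) hnadj hwz' hzz' hwz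
      (fun h => hwQ (h ▸ hz'Q)) (fun h => hzQ (h ▸ hz'Q))
  · by_contra hzw'
    exact no_claw hG hzv hwv ((hQsub hw'Q)) (fun h => hnadj h.symm) hzw' hww'
      hwz.symm (fun h => hzQ (h ▸ hw'Q)) (fun h => hwQ (h ▸ hw'Q))
end

section
/- Let H1 be the graph on vertices {a,b,c,d,e} with edge set {ab, bc, cd, de, ac, bd} (a path a-b-c-d-e together with chords ac and bd). Let G be a graph with no induced K_{1,3} and no induced H1. Let v be a vertex, Q a maximum clique in N(v), and suppose w, z in N(v)\Q are nonadjacent, with w', z' in Q satisfying ww', zz' not in E(G). Then every vertex q in Q \ {w', z'} is adjacent to both w and z. -/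
open SimpleGraph Sym2

/-- `H1`: the path a-b-c-d-e together with chords ac and bd. -/
def H1 : SimpleGraph (Fin 5) :=
  fromEdgeSet {s(0, 1), s(1, 2), s(2, 3), s(3, 4), s(0, 2), s(1, 3)}

def H1Free {V : Type*} (G : SimpleGraph V) : Prop := ¬ Nonempty (H1 ↪g G)

lemma claw_embed {V : Type*} {G : SimpleGraph V} {x a b c : V}
    (hxa : G.Adj x a) (hxb : G.Adj x b) (hxc : G.Adj x c)
    (hab : ¬ G.Adj a b) (hac : ¬ G.Adj a c) (hbc : ¬ G.Adj b c)
    (hab' : a ≠ b) (hac' : a ≠ c) (hbc' : b ≠ c) :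
    Nonempty (claw ↪g G) := by
  have hxa' := hxa.ne
  have hxb' := hxb.ne
  have hxc' := hxc.ne
  refine ⟨⟨⟨Sum.elim (fun _ => x) (![a,b,c]), ?_⟩, ?_⟩⟩
  · rintro (i|i) (j|j) h <;> fin_cases i <;> fin_cases j <;> simp_all
  · rintro (i|i) (j|j) <;> fin_cases i <;> fin_cases j <;>
      simp_all [claw, G.adj_comm, DFunLike.coe]

lemma h1_embed {V : Type*} {G : SimpleGraph V} {a b c d e : V}
    (hab : G.Adj a b) (hbc : G.Adj b c) (hcd : G.Adj c d) (hde : G.Adj d e)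
    (hac : G.Adj a c) (hbd : G.Adj b d)
    (had : ¬ G.Adj a d) (hae : ¬ G.Adj a e) (hbe : ¬ G.Adj b e) (hce : ¬ G.Adj c e)
    (had' : a ≠ d) (hae' : a ≠ e) (hbe' : b ≠ e) (hce' : c ≠ e) :
    Nonempty (H1 ↪g G) := by
  have h1 := hab.ne; have h2 := hbc.ne; have h3 := hcd.ne; have h4 := hde.ne
  have h5 := hac.ne; have h6 := hbd.ne
  refine ⟨⟨⟨![a,b,c,d,e], ?_⟩, ?_⟩⟩
  · intro i j h
    fin_cases i <;> fin_cases j <;> simp_all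
  · intro i j
    fin_cases i <;> fin_cases j <;>
      simp_all [H1, Sym2.eq, Sym2.rel_iff', G.adj_comm, DFunLike.coe]

theorem stmt_2 {V : Type*} [Fintype V] [DecidableEq V] {G : SimpleGraph V}
    (hG : ClawFree G) (hG1 : H1Free G) (v : V) (Q : Finset V)
    (hQ : IsMaxCliqueInNbhd G v Q)
    (w z : V) (hw : w ∈ G.neighborSet v \ ↑Q) (hz : z ∈ G.neighborSet v \ ↑Q)
    (hwz : w ≠ z) (hnadj : ¬ G.Adj w z)
    (w' z' : V) (hw' : w' ∈ Q) (hz' : z' ∈ Q)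
    (hww' : ¬ G.Adj w w') (hzz' : ¬ G.Adj z z') :
    ∀ q ∈ Q, q ≠ w' → q ≠ z' → G.Adj q w ∧ G.Adj q z := by
  intro q hq hqw' hqz'
  obtain ⟨hQsub, hQclique, -⟩ := hQ
  have hvw : G.Adj v w := hw.1
  have hvz : G.Adj v z := hz.1
  have hwQ : w ∉ Q := fun h => hw.2 (Finset.mem_coe.mpr h)
  have hzQ : z ∉ Q := fun h => hz.2 (Finset.mem_coe.mpr h)
  have hww'ne : w ≠ w' := fun h => hwQ (h ▸ hw')
  have hwz'ne : w ≠ z' := fun h => hwQ (h ▸ hz')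
  have hwqne : w ≠ q := fun h => hwQ (h ▸ hq)
  have hzw'ne : z ≠ w' := fun h => hzQ (h ▸ hw')
  have hzz'ne : z ≠ z' := fun h => hzQ (h ▸ hz')
  have hzqne : z ≠ q := fun h => hzQ (h ▸ hq)
  -- w' ≠ z'
  have hw'z' : w' ≠ z' := by
    intro h
    subst h
    exact hG (claw_embed hvw hvz (hQsub (Finset.mem_coe.mpr hw')) hnadj hww'
      (fun h => hzz' h) hwz hww'ne hzw'ne)
  -- z' adjacent to w
  have hwz'adj : G.Adj w z' := by
    by_contra h
    exact hG (claw_embed hvw hvz (hQsub (Finset.mem_coe.mpr hz')) hnadj h hzz'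
      hwz hwz'ne hzz'ne)
  -- w' adjacent to z
  have hzw'adj : G.Adj z w' := by
    by_contra h
    exact hG (claw_embed hvw hvz (hQsub (Finset.mem_coe.mpr hw')) hnadj hww' h
      hwz hww'ne hzw'ne)
  -- clique edges
  have hqw'adj : G.Adj q w' := hQclique (Finset.mem_coe.mpr hq) (Finset.mem_coe.mpr hw') hqw'
  have hqz'adj : G.Adj q z' := hQclique (Finset.mem_coe.mpr hq) (Finset.mem_coe.mpr hz') hqz'
  have hw'z'adj : G.Adj w' z' := hQclique (Finset.mem_coe.mpr hw') (Finset.mem_coe.mpr hz') hw'z'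
  -- q adjacent to w or z
  have hor : G.Adj q w ∨ G.Adj q z := by
    by_contra h
    push_neg at h
    exact hG (claw_embed hvw hvz (hQsub (Finset.mem_coe.mpr hq)) hnadj
      (fun hh => h.1 hh.symm) (fun hh => h.2 hh.symm) hwz hwqne hzqne)
  constructor
  · rcases hor with h | h
    · exact h
    · by_contra hqw
      -- H1 on (z, w', q, z', w)
      exact hG1 (h1_embed hzw'adj hqw'adj.symm hqz'adj hwz'adj.symm h.symm hw'z'adj
        hzz' (fun hh => hnadj hh.symm) (fun hh => hww' hh.symm) hqw
        hzz'ne hwz.symm hww'ne.symm hwqne.symm)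
  · rcases hor with h | h
    · by_contra hqz
      -- H1 on (w, z', q, w', z)
      exact hG1 (h1_embed hwz'adj hqz'adj.symm hqw'adj hzw'adj.symm h.symm hw'z'adj.symm
        hww' hnadj (fun hh => hzz' hh.symm) hqz
        hww'ne hwz hzz'ne.symm hzqne.symm)
    · exact h
end

section
/- The join of m copies of C_5 is claw-free (contains no induced K_{1,3}). -/
open SimpleGraph

/-- The join of `m` disjoint copies of the 5-cycle: vertices in different copies are
always adjacent, and vertices within a copy are adjacent as in `C₅`. -/
def joinC5 (m : ℕ) : SimpleGraph (Fin m × Fin 5) where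
  Adj x y := x.1 ≠ y.1 ∨ (x.1 = y.1 ∧ (cycleGraph 5).Adj x.2 y.2)
  symm := by
    constructor
    intro x y h
    rcases h with h | ⟨h1, h2⟩
    · exact Or.inl h.symm
    · exact Or.inr ⟨h1.symm, h2.symm⟩
  loopless := by
    constructor
    intro x h
    rcases h with h | ⟨_, h2⟩
    · exact h rfl
    · exact (cycleGraph 5).loopless.irrefl _ h2

lemma c5_indep : ∀ a b d : Fin 5, a ≠ b → a ≠ d → b ≠ d →
    ¬(cycleGraph 5).Adj a b → ¬(cycleGraph 5).Adj a d → ¬(cycleGraph 5).Adj b d → False := by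
  decide

lemma c5_deg : ∀ c a b d : Fin 5, (cycleGraph 5).Adj c a → (cycleGraph 5).Adj c b →
    (cycleGraph 5).Adj c d → a ≠ b → a ≠ d → b ≠ d → False := by
  decide

theorem stmt_9 (m : ℕ) : ¬ Nonempty (claw ↪g joinC5 m) := by
  rintro ⟨f⟩
  set c := f (.inl 0) with hc
  set a := f (.inr 0) with ha
  set b := f (.inr 1) with hb
  set d := f (.inr 2) with hd
  have hca : (joinC5 m).Adj c a := f.map_adj_iff.2 (by simp [claw])
  have hcb : (joinC5 m).Adj c b := f.map_adj_iff.2 (by simp [claw])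
  have hcd : (joinC5 m).Adj c d := f.map_adj_iff.2 (by simp [claw])
  have hab : ¬(joinC5 m).Adj a b := fun h => by
    simpa [claw] using f.map_adj_iff.1 h
  have had : ¬(joinC5 m).Adj a d := fun h => by
    simpa [claw] using f.map_adj_iff.1 h
  have hbd : ¬(joinC5 m).Adj b d := fun h => by
    simpa [claw] using f.map_adj_iff.1 h
  have iab : a ≠ b := fun h => by simpa using f.injective h
  have iad : a ≠ d := fun h => by simpa using f.injective h
  have ibd : b ≠ d := fun h => by simpa using f.injective h
  simp only [joinC5, not_or, not_and] at hab had hbd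
  obtain ⟨e1, n1⟩ := hab
  obtain ⟨e2, n2⟩ := had
  obtain ⟨e3, n3⟩ := hbd
  rw [not_ne_iff] at e1 e2 e3
  have h2ab : a.2 ≠ b.2 := fun h => iab (Prod.ext e1 h)
  have h2ad : a.2 ≠ d.2 := fun h => iad (Prod.ext e2 h)
  have h2bd : b.2 ≠ d.2 := fun h => ibd (Prod.ext e3 h)
  by_cases hc1 : c.1 = a.1
  · rcases hca with h | ⟨_, h⟩
    · exact h hc1
    · rcases hcb with h' | ⟨_, h'⟩
      · exact h' (hc1.trans e1)
      · rcases hcd with h'' | ⟨_, h''⟩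
        · exact h'' (hc1.trans e2)
        · exact c5_deg c.2 a.2 b.2 d.2 h h' h'' h2ab h2ad h2bd
  · exact c5_indep a.2 b.2 d.2 h2ab h2ad h2bd (n1 e1) (n2 e2) (n3 e3)
end

section
/- Let G be claw-free and H1-free, let v be a vertex, Q a maximum clique in N(v), and suppose N(v) \ Q contains two nonadjacent vertices w, z and a third vertex x with |N(v) \ Q| ≥ 3. Then x is adjacent to both w and z. -/
open SimpleGraph

instance : DecidableRel H1.Adj := fun i j =>
  decidable_of_iff
    ((s(i,j) ∈ ({s(0,1), s(1,2), s(2,3), s(3,4), s(0,2), s(1,3)} :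
      Finset (Sym2 (Fin 5)))) ∧ i ≠ j)
    (by simp [H1, fromEdgeSet_adj])

lemma claw_of {V : Type*} {G : SimpleGraph V} (hclaw : ¬ Nonempty (claw ↪g G))
    {c a b d : V} (hab : a ≠ b) (had : a ≠ d) (hbd : b ≠ d)
    (hca : G.Adj c a) (hcb : G.Adj c b) (hcd : G.Adj c d)
    (hnab : ¬ G.Adj a b) (hnad : ¬ G.Adj a d) (hnbd : ¬ G.Adj b d) : False := by
  have hca' := hca.symm; have hcb' := hcb.symm; have hcd' := hcd.symm
  have hnab' : ¬ G.Adj b a := fun h => hnab h.symm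
  have hnad' : ¬ G.Adj d a := fun h => hnad h.symm
  have hnbd' : ¬ G.Adj d b := fun h => hnbd h.symm
  have hac : a ≠ c := hca.ne'
  have hbc : b ≠ c := hcb.ne'
  have hdc : d ≠ c := hcd.ne'
  have hba := hab.symm; have hda := had.symm; have hdb := hbd.symm
  have hcb2 := hbc.symm; have hca2 := hac.symm; have hcd2 := hdc.symm
  refine hclaw ⟨⟨⟨Sum.elim (fun _ => c) ![a,b,d], ?_⟩, ?_⟩⟩
  · rintro (i | i) (j | j) hij <;>
      simp only [Sum.elim_inl, Sum.elim_inr] at hij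
    · exact congrArg Sum.inl (Subsingleton.elim i j)
    · exfalso; fin_cases j <;> simp_all
    · exfalso; fin_cases i <;> simp_all
    · congr 1; fin_cases i <;> fin_cases j <;> simp_all
  · rintro (i | i) (j | j) <;>
      erw [Function.Embedding.coeFn_mk] <;>
      fin_cases i <;> fin_cases j <;>
      simp_all [claw]

lemma h1_of {V : Type*} {G : SimpleGraph V} (h1 : ¬ Nonempty (H1 ↪g G))
    {a b c d e : V}
    (hne_ad : a ≠ d) (hne_ae : a ≠ e) (hne_be : b ≠ e) (hne_ce : c ≠ e)
    (hab : G.Adj a b) (hbc : G.Adj b c) (hcd : G.Adj c d) (hde : G.Adj d e)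
    (hac : G.Adj a c) (hbd : G.Adj b d)
    (hnad : ¬ G.Adj a d) (hnae : ¬ G.Adj a e) (hnbe : ¬ G.Adj b e)
    (hnce : ¬ G.Adj c e) : False := by
  have hab' := hab.symm; have hbc' := hbc.symm; have hcd' := hcd.symm
  have hde' := hde.symm; have hac' := hac.symm; have hbd' := hbd.symm
  have hnad' : ¬ G.Adj d a := fun h => hnad h.symm
  have hnae' : ¬ G.Adj e a := fun h => hnae h.symm
  have hnbe' : ¬ G.Adj e b := fun h => hnbe h.symm
  have hnce' : ¬ G.Adj e c := fun h => hnce h.symm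
  have n1 : a ≠ b := hab.ne
  have n2 : b ≠ c := hbc.ne
  have n3 : c ≠ d := hcd.ne
  have n4 : d ≠ e := hde.ne
  have n5 : a ≠ c := hac.ne
  have n6 : b ≠ d := hbd.ne
  have n1' := n1.symm; have n2' := n2.symm; have n3' := n3.symm
  have n4' := n4.symm; have n5' := n5.symm; have n6' := n6.symm
  have nad' := hne_ad.symm; have nae' := hne_ae.symm
  have nbe' := hne_be.symm; have nce' := hne_ce.symm
  refine h1 ⟨⟨⟨![a,b,c,d,e], ?_⟩, ?_⟩⟩
  · intro i j hij
    fin_cases i <;> fin_cases j <;>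
      simp only [Matrix.cons_val_zero, Matrix.cons_val_one, Matrix.head_cons,
        Matrix.cons_val_two, Matrix.tail_cons, Matrix.cons_val_three,
        Matrix.cons_val_four, Matrix.head_fin_const, Matrix.cons_val_succ] at hij <;>
      first | rfl | exact absurd hij (by assumption)
  · intro i j
    fin_cases i <;> fin_cases j <;>
      simp only [Matrix.cons_val_zero, Matrix.cons_val_one, Matrix.head_cons,
        Matrix.cons_val_two, Matrix.tail_cons, Matrix.cons_val_three,
        Matrix.cons_val_four, Matrix.head_fin_const, Matrix.cons_val_succ] <;>
      first
        | exact iff_of_true (by assumption) (by decide)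
        | exact iff_of_false (by assumption) (by decide)
        | exact iff_of_false (G.loopless.irrefl _) (by decide)

lemma exists_nonadj {V : Type*} [DecidableEq V] {G : SimpleGraph V} {v : V} {Q : Finset V}
    (hQ : IsMaxCliqueInNbhd G v Q) {u : V} (hu : G.Adj v u) (huQ : u ∉ Q) :
    ∃ c ∈ Q, ¬ G.Adj c u := by
  by_contra h
  push_neg at h
  obtain ⟨hs, hc, hm⟩ := hQ
  have hsub : ↑(insert u Q) ⊆ G.neighborSet v := by
    rw [Finset.coe_insert]
    intro y hy
    rcases Set.mem_insert_iff.mp hy with rfl | hy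
    · exact hu
    · exact hs hy
  have hcl : G.IsClique ↑(insert u Q) := by
    rw [Finset.coe_insert]
    exact hc.insert (fun b hb _ => (h b (Finset.mem_coe.mp hb)).symm)
  have hle := hm (insert u Q) hsub hcl
  rw [Finset.card_insert_of_notMem huQ] at hle
  omega

lemma two_nonadj {V : Type*} [DecidableEq V] {G : SimpleGraph V} {v : V} {Q : Finset V}
    (hQ : IsMaxCliqueInNbhd G v Q) {x z : V}
    (hvx : G.Adj v x) (hvz : G.Adj v z) (hxQ : x ∉ Q) (hzQ : z ∉ Q)
    (hxz : G.Adj x z) :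
    ∃ a ∈ Q, ∃ b ∈ Q, a ≠ b ∧ ¬ (G.Adj x a ∧ G.Adj z a) ∧ ¬ (G.Adj x b ∧ G.Adj z b) := by
  classical
  obtain ⟨hs, hc, hm⟩ := hQ
  set P := Q.filter (fun q => G.Adj x q ∧ G.Adj z q) with hP
  set N := Q.filter (fun q => ¬ (G.Adj x q ∧ G.Adj z q)) with hN
  have hPQ : P ⊆ Q := Finset.filter_subset _ _
  have hxP : x ∉ P := fun h => hxQ (hPQ h)
  have hzP : z ∉ P := fun h => hzQ (hPQ h)
  have hsub : ↑(insert x (insert z P)) ⊆ G.neighborSet v := by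
    rw [Finset.coe_insert, Finset.coe_insert]
    intro y hy
    rcases Set.mem_insert_iff.mp hy with rfl | hy
    · exact hvx
    rcases Set.mem_insert_iff.mp hy with rfl | hy
    · exact hvz
    · exact hs (Finset.coe_subset.mpr hPQ hy)
  have hcl : G.IsClique ↑(insert x (insert z P)) := by
    rw [Finset.coe_insert, Finset.coe_insert]
    have hbase : G.IsClique (↑P : Set V) :=
      hc.subset (Finset.coe_subset.mpr hPQ)
    have h1 : G.IsClique (insert z (↑P : Set V)) :=
      hbase.insert (fun b hb _ =>
        (Finset.mem_filter.mp (Finset.mem_coe.mp hb)).2.2)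
    refine h1.insert (fun b hb _ => ?_)
    rcases Set.mem_insert_iff.mp hb with rfl | hb
    · exact hxz
    · exact (Finset.mem_filter.mp (Finset.mem_coe.mp hb)).2.1
  have hle := hm _ hsub hcl
  have hzP' : z ∉ insert z P → False := fun h => h (Finset.mem_insert_self _ _)
  have hxzP : x ∉ insert z P := by
    intro h
    rcases Finset.mem_insert.mp h with h | h
    · exact hxz.ne h
    · exact hxP h
  rw [Finset.card_insert_of_notMem hxzP,
    Finset.card_insert_of_notMem (by intro h; exact hzP h)] at hle
  have hsplit := Finset.card_filter_add_card_filter_not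
    (s := Q) (fun q => G.Adj x q ∧ G.Adj z q)
  have hN2 : 1 < N.card := by
    rw [← hN] at hsplit
    rw [← hP] at hsplit
    omega
  obtain ⟨a, ha, b, hb, hab⟩ := Finset.one_lt_card.mp hN2
  refine ⟨a, (Finset.filter_subset _ _) ha, b, (Finset.filter_subset _ _) hb, hab,
    (Finset.mem_filter.mp ha).2, (Finset.mem_filter.mp hb).2⟩

lemma key {V : Type*} [DecidableEq V] {G : SimpleGraph V}
    (hclaw : ¬ Nonempty (claw ↪g G)) (h1 : ¬ Nonempty (H1 ↪g G))
    (v : V) (Q : Finset V) (hQ : IsMaxCliqueInNbhd G v Q)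
    (w z x : V) (hvw : G.Adj v w) (hvz : G.Adj v z) (hvx : G.Adj v x)
    (hwQ : w ∉ Q) (hzQ : z ∉ Q) (hxQ : x ∉ Q)
    (hnadj : ¬ G.Adj w z) (hxz : G.Adj x z) (hxw : ¬ G.Adj x w) : False := by
  have hQsub := hQ.1
  have hQclique := hQ.2.1
  have hadj_of_mem : ∀ {c : V}, c ∈ Q → G.Adj v c := by
    intro c hc
    have := hQsub (Finset.mem_coe.mpr hc)
    simpa using this
  have hne_xw : x ≠ w := by rintro rfl; exact hnadj hxz
  have hne_zw : z ≠ w := by rintro rfl; exact hxw hxz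
  -- a vertex of Q nonadjacent to w
  obtain ⟨c, hcQ, hcw⟩ := exists_nonadj hQ hvw hwQ
  have hvc : G.Adj v c := hadj_of_mem hcQ
  have hne_xc : x ≠ c := by rintro rfl; exact hxQ hcQ
  have hne_wc : w ≠ c := by rintro rfl; exact hwQ hcQ
  have hne_zc : z ≠ c := by rintro rfl; exact hzQ hcQ
  have hcx : G.Adj c x := by
    by_contra hcx
    exact claw_of hclaw hne_xw hne_xc hne_wc hvx hvw hvc hxw
      (fun h => hcx h.symm) (fun h => hcw h.symm)
  have hcz : G.Adj c z := by
    by_contra hcz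
    exact claw_of hclaw hne_zw.symm hne_wc hne_zc hvw hvz hvc hnadj
      (fun h => hcw h.symm) (fun h => hcz h.symm)
  by_cases hcase1 : ∃ d ∈ Q, G.Adj d z ∧ ¬ G.Adj d x
  · obtain ⟨d, hdQ, hdz, hdx⟩ := hcase1
    have hvd : G.Adj v d := hadj_of_mem hdQ
    have hne_xd : x ≠ d := by rintro rfl; exact hxQ hdQ
    have hne_wd : w ≠ d := by rintro rfl; exact hwQ hdQ
    have hdw : G.Adj d w := by
      by_contra hdw
      exact claw_of hclaw hne_xw hne_xd hne_wd hvx hvw hvd hxw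
        (fun h => hdx h.symm) (fun h => hdw h.symm)
    have hcd : G.Adj c d :=
      hQclique (Finset.mem_coe.mpr hcQ) (Finset.mem_coe.mpr hdQ)
        (by rintro rfl; exact hdx hcx)
    -- induced H1 on (x, z, c, d, w)
    exact h1_of h1 hne_xd hne_xw hne_zw hne_wc.symm
      hxz hcz.symm hcd hdw hcx.symm hdz.symm
      (fun h => hdx h.symm) hxw (fun h => hnadj h.symm) hcw
  by_cases hcase2 : ∃ d ∈ Q, G.Adj d x ∧ ¬ G.Adj d z
  · obtain ⟨d, hdQ, hdx, hdz⟩ := hcase2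
    have hvd : G.Adj v d := hadj_of_mem hdQ
    have hne_zd : z ≠ d := by rintro rfl; exact hzQ hdQ
    have hne_wd : w ≠ d := by rintro rfl; exact hwQ hdQ
    have hdw : G.Adj d w := by
      by_contra hdw
      exact claw_of hclaw hne_zw.symm hne_wd hne_zd hvw hvz hvd hnadj
        (fun h => hdw h.symm) (fun h => hdz h.symm)
    have hcd : G.Adj c d :=
      hQclique (Finset.mem_coe.mpr hcQ) (Finset.mem_coe.mpr hdQ)
        (by rintro rfl; exact hdz hcz)
    -- induced H1 on (z, x, c, d, w)
    exact h1_of h1 hne_zd hne_zw hne_xw hne_wc.symm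
      hxz.symm hcx.symm hcd hdw hcz.symm hdx.symm
      (fun h => hdz h.symm) (fun h => hnadj h.symm) hxw hcw
  -- remaining case: every vertex of Q adjacent to x iff adjacent to z
  push_neg at hcase1 hcase2
  obtain ⟨a, haQ, b, hbQ, hab, hna, hnb⟩ := two_nonadj hQ hvx hvz hxQ hzQ hxz
  have hax : ¬ G.Adj a x := fun h => hna ⟨h.symm, (hcase2 a haQ h).symm⟩
  have haz : ¬ G.Adj a z := fun h => hax (hcase1 a haQ h)
  have hbx : ¬ G.Adj b x := fun h => hnb ⟨h.symm, (hcase2 b hbQ h).symm⟩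
  have hbz : ¬ G.Adj b z := fun h => hbx (hcase1 b hbQ h)
  have hva : G.Adj v a := hadj_of_mem haQ
  have hvb : G.Adj v b := hadj_of_mem hbQ
  have hne_xa : x ≠ a := by rintro rfl; exact hxQ haQ
  have hne_xb : x ≠ b := by rintro rfl; exact hxQ hbQ
  have hne_wa : w ≠ a := by rintro rfl; exact hwQ haQ
  have hne_wb : w ≠ b := by rintro rfl; exact hwQ hbQ
  have haw : G.Adj a w := by
    by_contra haw
    exact claw_of hclaw hne_xw hne_xa hne_wa hvx hvw hva hxw
      (fun h => hax h.symm) (fun h => haw h.symm)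
  have hbw : G.Adj b w := by
    by_contra hbw
    exact claw_of hclaw hne_xw hne_xb hne_wb hvx hvw hvb hxw
      (fun h => hbx h.symm) (fun h => hbw h.symm)
  have habAdj : G.Adj a b :=
    hQclique (Finset.mem_coe.mpr haQ) (Finset.mem_coe.mpr hbQ) hab
  have hac : G.Adj a c :=
    hQclique (Finset.mem_coe.mpr haQ) (Finset.mem_coe.mpr hcQ)
      (by rintro rfl; exact hax hcx)
  have hbc : G.Adj b c :=
    hQclique (Finset.mem_coe.mpr hbQ) (Finset.mem_coe.mpr hcQ)
      (by rintro rfl; exact hbx hcx)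
  -- induced H1 on (w, a, b, c, x)
  exact h1_of h1 hne_wc hne_xw.symm hne_xa.symm hne_xb.symm
    haw.symm habAdj hbc hcx hbw.symm hac
    (fun h => hcw h.symm) (fun h => hxw h.symm) hax hbx

theorem stmt_11 {V : Type*} [Fintype V] [DecidableEq V] {G : SimpleGraph V}
    (hclaw : ¬ Nonempty (claw ↪g G)) (h1 : ¬ Nonempty (H1 ↪g G))
    (v : V) (Q : Finset V) (hQ : IsMaxCliqueInNbhd G v Q)
    (w z x : V) (hw : w ∈ G.neighborSet v \ ↑Q) (hz : z ∈ G.neighborSet v \ ↑Q)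
    (hx : x ∈ G.neighborSet v \ ↑Q) (hwz : w ≠ z) (hnadj : ¬ G.Adj w z)
    (hxw : x ≠ w) (hxz : x ≠ z)
    (hcard : 3 ≤ (G.neighborSet v \ ↑Q).ncard) :
    G.Adj x w ∧ G.Adj x z := by
  simp only [Set.mem_diff, mem_neighborSet, Finset.mem_coe] at hw hz hx
  obtain ⟨hvw, hwQ⟩ := hw
  obtain ⟨hvz, hzQ⟩ := hz
  obtain ⟨hvx, hxQ⟩ := hx
  have hxw' : G.Adj x w := by
    by_contra hxw'
    have hxz' : G.Adj x z := by
      by_contra hxz'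
      exact claw_of hclaw hwz hxw.symm hxz.symm hvw hvz hvx hnadj
        (fun h => hxw' h.symm) (fun h => hxz' h.symm)
    exact key hclaw h1 v Q hQ w z x hvw hvz hvx hwQ hzQ hxQ hnadj hxz' hxw'
  refine ⟨hxw', ?_⟩
  by_contra hxz'
  exact key hclaw h1 v Q hQ z w x hvz hvw hvx hzQ hwQ hxQ
    (fun h => hnadj h.symm) hxw' hxz'
end

section
/- The join of m ≥ 1 copies of C_5 contains no induced H1, where H1 is the path a-b-c-d-e with added chords ac and bd. -/
open SimpleGraph

lemma c5aux : ∀ v a b c : Fin 5, a ≠ b → a ≠ c → b ≠ c → a ≠ v → b ≠ v → c ≠ v →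
    ¬ (cycleGraph 5).Adj v a → ¬ (cycleGraph 5).Adj v b → ¬ (cycleGraph 5).Adj v c → False := by
  decide

theorem stmt_16 (m : ℕ) (hm : 1 ≤ m) : ¬ Nonempty (H1 ↪g joinC5 m) := by
  rintro ⟨f⟩
  have key : ∀ i : Fin 5, ¬ H1.Adj 4 i → i ≠ 4 →
      (f 4).1 = (f i).1 ∧ (f i).2 ≠ (f 4).2 ∧ ¬ (cycleGraph 5).Adj (f 4).2 (f i).2 := by
    intro i hna hne
    have h : ¬ (joinC5 m).Adj (f 4) (f i) := by rw [f.map_adj_iff]; exact hna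
    simp only [joinC5, not_or, not_and, ne_eq, not_not] at h
    obtain ⟨h1, h2⟩ := h
    refine ⟨h1, ?_, h2 h1⟩
    intro heq
    exact hne (f.injective (Prod.ext h1.symm heq) ▸ rfl)
  have h0 := key 0 (by simp [H1]) (by decide)
  have h1 := key 1 (by simp [H1]) (by decide)
  have h2 := key 2 (by simp [H1]) (by decide)
  have d01 : (f 0).2 ≠ (f 1).2 := fun h => by
    exact absurd (f.injective (Prod.ext (h0.1.symm.trans h1.1) h)) (by decide)
  have d02 : (f 0).2 ≠ (f 2).2 := fun h => by
    exact absurd (f.injective (Prod.ext (h0.1.symm.trans h2.1) h)) (by decide)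
  have d12 : (f 1).2 ≠ (f 2).2 := fun h => by
    exact absurd (f.injective (Prod.ext (h1.1.symm.trans h2.1) h)) (by decide)
  exact c5aux (f 4).2 (f 0).2 (f 1).2 (f 2).2 d01 d02 d12 h0.2.1 h1.2.1 h2.2.1
    h0.2.2 h1.2.2 h2.2.2
end
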